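/- Let R be an Artinian commutative ring that is not a field (more generally, not an integral domain). Then every nonzero proper ideal I of R is an annihilating ideal, i.e., there exists a nonzero ideal J of R with IJ = (0). -/

import Mathlib

/-- In an Artinian commutative ring that is not an integral domain,
every nonzero proper ideal is an annihilating ideal. -/
theorem stmt0 (R : Type*) [CommRing R] [Nontrivial R] [IsArtinianRing R]
    (hR : ¬ IsDomain R) (I : Ideal R) (hI0 : I ≠ ⊥) (hItop : I ≠ ⊤) :
    ∃ J : Ideal R, J ≠ ⊥ ∧ I * J = ⊥ := by
  classical
  -- choose a maximal ideal containing I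
  obtain ⟨m, hm, hIm⟩ := Ideal.exists_le_maximal I hItop
  -- the finite set of maximal ideals
  have hfin := IsArtinianRing.setOfPred_isMaximal_finite R
  set s : Finset (Ideal R) := hfin.toFinset with hs
  have hms : m ∈ s := by simp [hs, Set.Finite.mem_toFinset]; exact hm
  -- Jacobson radical is nilpotent
  obtain ⟨n, hn⟩ := IsArtinianRing.isNilpotent_jacobson_bot (R := R)
  -- product of the other maximal ideals
  set P : Ideal R := ∏ p ∈ s.erase m, p with hP
  -- m * P is contained in the Jacobson radical
  have hmP : m * P ≤ Ideal.jacobson ⊥ := by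
    rw [Ideal.jacobson]
    refine le_sInf ?_
    rintro J ⟨-, hJ⟩
    by_cases hJm : J = m
    · subst hJm; exact Ideal.mul_le_left
    · have hJs : J ∈ s.erase m :=
        Finset.mem_erase.mpr ⟨hJm, by simp [hs, Set.Finite.mem_toFinset]; exact hJ⟩
      calc m * P ≤ P := Ideal.mul_le_right
        _ ≤ (s.erase m).inf id := Ideal.prod_le_inf
        _ ≤ J := Finset.inf_le hJs
  -- hence m^n * P^n = ⊥
  have hkey : m ^ n * P ^ n = ⊥ := by
    have h1 : (m * P) ^ n ≤ ⊥ :=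
      le_of_le_of_eq (Ideal.pow_right_mono hmP n) hn
    rw [mul_pow] at h1
    exact le_bot_iff.mp h1
  -- P^n is nonzero
  have hQ : P ^ n ≠ ⊥ := by
    intro h
    have hn0 : n ≠ 0 := by
      intro hn0
      rw [hn0, pow_zero, Ideal.one_eq_top] at h
      exact top_ne_bot h
    have hpn : P ^ n ≤ m := h ▸ bot_le
    haveI := hm.isPrime
    have hple : P ≤ m := Ideal.IsPrime.le_of_pow_le hpn
    obtain ⟨p, hps, hpm⟩ := (Ideal.IsPrime.prod_le hm.isPrime).mp hple
    have hps' := Finset.mem_erase.mp hps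
    have hpmax : p.IsMaximal := by
      have : p ∈ s := Finset.mem_of_mem_erase hps
      rw [hs, Set.Finite.mem_toFinset] at this
      exact this
    exact hps'.1 (hpmax.eq_of_le hm.ne_top hpm)
  -- take the least c with m^c * P^n = ⊥
  have hex : ∃ c, m ^ c * P ^ n = ⊥ := ⟨n, hkey⟩
  set c := Nat.find hex with hc
  have hcspec : m ^ c * P ^ n = ⊥ := Nat.find_spec hex
  have hc0 : c ≠ 0 := by
    intro h0
    rw [h0, pow_zero, Ideal.one_eq_top, Ideal.top_mul] at hcspec
    exact hQ hcspec
  refine ⟨m ^ (c - 1) * P ^ n, ?_, ?_⟩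
  · exact Nat.find_min hex (Nat.sub_lt (Nat.pos_of_ne_zero hc0) one_pos)
  · refine le_bot_iff.mp ?_
    calc I * (m ^ (c - 1) * P ^ n) ≤ m * (m ^ (c - 1) * P ^ n) :=
          Ideal.mul_mono_left hIm
      _ = m ^ c * P ^ n := by
          rw [← mul_assoc, ← pow_succ', Nat.sub_add_cancel (Nat.one_le_iff_ne_zero.mpr hc0)]
      _ = ⊥ := hcspec
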